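/- arXiv:math/0606411 — 3 statements merged into one kernel-verified Lean document; each statement's English description precedes it below -/
import Mathlib

section
/- Let k(x) = C · x^b / (1 + c x)^{1 + a/c} for x > 0, where a, b, c > 0 with a/c > b and C = c^{b+1} Γ(a/c + 1) / (Γ(a/c − b) Γ(b+1)). Then k satisfies the integral equation (1 + c x) k(x) = a ∫_x^∞ (x/u)^b k(u) du for all x > 0. -/
open Set Real MeasureTheory

theorem stmt_1 (a b c : ℝ) (ha : 0 < a) (hb : 0 < b) (hc : 0 < c)
    (hab : b < a / c)
    (C : ℝ) (hC : C = c ^ (b + 1) * Real.Gamma (a / c + 1) /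
      (Real.Gamma (a / c - b) * Real.Gamma (b + 1)))
    (k : ℝ → ℝ) (hk : ∀ x : ℝ, 0 < x → k x = C * x ^ b / (1 + c * x) ^ (1 + a / c)) :
    ∀ x : ℝ, 0 < x →
      (1 + c * x) * k x = a * ∫ u in Ioi x, (x / u) ^ b * k u := by
  intro x hx
  have hac : 0 < a / c := div_pos ha hc
  have h1x : 0 < 1 + c * x := by positivity
  -- Step A: rewrite the integrand on Ioi x
  have hA : ∫ u in Ioi x, (x / u) ^ b * k u
      = ∫ u in Ioi x, C * x ^ b * (1 + c * u) ^ (-(a / c) - 1) := by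
    apply setIntegral_congr_fun measurableSet_Ioi
    intro u hu
    have hu0 : 0 < u := hx.trans hu
    have h1u : 0 < 1 + c * u := by positivity
    dsimp only
    rw [hk u hu0, Real.div_rpow hx.le hu0.le]
    have hub : (0:ℝ) < u ^ b := Real.rpow_pos_of_pos hu0 b
    have hpow : (1 + c * u) ^ (-(a / c) - 1) = ((1 + c * u) ^ (1 + a / c))⁻¹ := by
      rw [← Real.rpow_neg h1u.le]
      ring_nf
    rw [hpow]
    have hup : (0:ℝ) < (1 + c * u) ^ (1 + a / c) := Real.rpow_pos_of_pos h1u _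
    field_simp
  -- Step C: compute the integral of (1+cu)^(-(a/c)-1)
  have hint : ∫ u in Ioi x, (1 + c * u) ^ (-(a / c) - 1)
      = (1 + c * x) ^ (-(a / c)) / a := by
    have hderiv : ∀ u ∈ Ici x,
        HasDerivAt (fun u : ℝ => -(1 + c * u) ^ (-(a / c)) / a)
          ((1 + c * u) ^ (-(a / c) - 1)) u := by
      intro u hu
      have hu0 : 0 < u := lt_of_lt_of_le hx hu
      have h1u : 0 < 1 + c * u := by positivity
      have hinner : HasDerivAt (fun u : ℝ => 1 + c * u) c u := by
        simpa using ((hasDerivAt_id u).const_mul c).const_add 1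
      have houter := Real.hasDerivAt_rpow_const (x := 1 + c * u) (p := -(a / c))
        (Or.inl h1u.ne')
      have := ((houter.comp u hinner).neg).div_const a
      convert this using 1
      · rfl
      · rfl
      · rfl
      · field_simp
    have hpos : ∀ u ∈ Ioi x, 0 ≤ (1 + c * u) ^ (-(a / c) - 1) := by
      intro u hu
      have hu0 : 0 < u := hx.trans hu
      have h1u : (0:ℝ) < 1 + c * u := by positivity
      exact (Real.rpow_pos_of_pos h1u _).le
    have htend : Filter.Tendsto (fun u : ℝ => -(1 + c * u) ^ (-(a / c)) / a)
        Filter.atTop (nhds 0) := by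
      have h1 : Filter.Tendsto (fun u : ℝ => 1 + c * u) Filter.atTop Filter.atTop := by
        apply Filter.tendsto_atTop_add_const_left
        exact Filter.Tendsto.const_mul_atTop hc Filter.tendsto_id
      have h2 : Filter.Tendsto (fun y : ℝ => y ^ (-(a / c))) Filter.atTop (nhds 0) :=
        tendsto_rpow_neg_atTop hac
      have := ((h2.comp h1).neg).div_const a
      simpa using this
    rw [integral_Ioi_of_hasDerivAt_of_nonneg' hderiv hpos htend]
    field_simp
    ring
  -- put things together
  rw [hA, MeasureTheory.integral_const_mul, hint, hk x hx]
  have hpow : (1 + c * x) ^ (1 + a / c) = (1 + c * x) * (1 + c * x) ^ (a / c) := by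
    rw [Real.rpow_add h1x, Real.rpow_one]
  have hneg : (1 + c * x) ^ (-(a / c)) = ((1 + c * x) ^ (a / c))⁻¹ :=
    Real.rpow_neg h1x.le _
  have hxp : (0:ℝ) < (1 + c * x) ^ (a / c) := Real.rpow_pos_of_pos h1x _
  rw [hpow, hneg]
  field_simp
end

section
/- Let V be a real-valued Lévy process with no positive jumps, not the opposite of a subordinator, with Laplace exponent Φ(λ) = log E[e^{λ V_1}] finite on [0,∞), and suppose lim_{t→∞} V_t = −∞ a.s. Let κ > 0 be the unique positive root of Φ and let Ψ : [0,∞) → [κ,∞) be the right inverse of Φ. Then E[∫_0^∞ 1{V_t ≥ 0} dt] = Ψ'(0)/Ψ(0) = 1/(κ Φ'(κ)). -/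
open MeasureTheory Set Filter

set_option maxHeartbeats 1000000

theorem stmt_5 {Ω : Type*} [MeasurableSpace Ω] (μ : Measure Ω) [IsProbabilityMeasure μ]
    (V : ℝ → Ω → ℝ)
    (hjm : Measurable (Function.uncurry V))
    (Φ : ℝ → ℝ)
    (hlap : ∀ lam : ℝ, 0 ≤ lam → ∀ t : ℝ, 0 ≤ t →
      ∫ ω, Real.exp (lam * V t ω) ∂μ = Real.exp (t * Φ lam))
    (hdrift : ∀ᵐ ω ∂μ, Tendsto (fun t => V t ω) atTop atBot)
    (κ : ℝ) (hκ : 0 < κ) (hκroot : Φ κ = 0)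
    (hκuniq : ∀ x : ℝ, 0 < x → Φ x = 0 → x = κ)
    (Ψ DΨ : ℝ → ℝ)
    (hΨκ : Ψ 0 = κ)
    (hΨinv : ∀ lam : ℝ, 0 ≤ lam → Φ (Ψ lam) = lam)
    (hΨderiv : ∀ lam : ℝ, 0 ≤ lam → HasDerivWithinAt Ψ (DΨ lam) (Ici 0) lam)
    (dΦκ : ℝ) (hΦderiv : HasDerivAt Φ dΦκ κ) (hΦκpos : 0 < dΦκ)
    (hident : ∀ lam : ℝ, 0 < lam →
      ∫ ω, (∫ t in Ioi (0:ℝ), Real.exp (-lam * t) * (if 0 ≤ V t ω then (1:ℝ) else 0)) ∂μ =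
        DΨ lam / Ψ lam) :
    ∫ ω, (∫ t in Ioi (0:ℝ), (if 0 ≤ V t ω then (1:ℝ) else 0)) ∂μ = DΨ 0 / Ψ 0 ∧
      DΨ 0 / Ψ 0 = 1 / (κ * dΦκ) := by
  classical
  -- Φ 0 = 0
  have hΦ0 : Φ 0 = 0 := by
    have h := hlap 0 le_rfl 1 zero_le_one
    simp only [zero_mul, Real.exp_zero, one_mul] at h
    rw [integral_const, probReal_univ, smul_eq_mul, mul_one] at h
    exact (Real.exp_eq_one_iff _).mp h.symm
  -- Ψ is continuous and positive on [0, ∞)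
  have hΨcont : ContinuousOn Ψ (Ici 0) := fun x hx => (hΨderiv x hx).continuousWithinAt
  have hΨpos : ∀ lam : ℝ, 0 ≤ lam → 0 < Ψ lam := by
    intro b hb
    by_contra hle
    push_neg at hle
    have hsub : Icc (0:ℝ) b ⊆ Ici 0 := fun x hx => hx.1
    have hcont : ContinuousOn Ψ (Icc 0 b) := hΨcont.mono hsub
    have h0mem : (0:ℝ) ∈ Icc (Ψ b) (Ψ 0) := ⟨hle, by rw [hΨκ]; exact hκ.le⟩
    obtain ⟨c, hc, hΨc⟩ := intermediate_value_Icc' hb hcont h0mem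
    have hc0 : c = 0 := by
      have h2 := hΨinv c hc.1
      rw [hΨc, hΦ0] at h2
      exact h2.symm
    rw [hc0, hΨκ] at hΨc
    exact absurd hΨc hκ.ne'
  have hΨ0pos : 0 < Ψ 0 := hΨpos 0 le_rfl
  -- second conjunct: chain rule
  have hchain : HasDerivWithinAt (Φ ∘ Ψ) (dΦκ * DΨ 0) (Ici 0) 0 := by
    have h1 : HasDerivAt Φ dΦκ (Ψ 0) := by rw [hΨκ]; exact hΦderiv
    exact h1.comp_hasDerivWithinAt 0 (hΨderiv 0 le_rfl)
  have hidd : HasDerivWithinAt (Φ ∘ Ψ) 1 (Ici 0) 0 := by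
    have h1 : HasDerivWithinAt (fun x : ℝ => x) 1 (Ici 0) 0 := hasDerivWithinAt_id 0 _
    exact h1.congr (fun x hx => hΨinv x hx) (hΨinv 0 le_rfl)
  have huniq : dΦκ * DΨ 0 = 1 :=
    UniqueDiffWithinAt.eq_deriv _ (uniqueDiffOn_Ici 0 0 self_mem_Ici) hchain hidd
  have hκne : κ ≠ 0 := hκ.ne'
  have hdne : dΦκ ≠ 0 := hΦκpos.ne'
  have hsecond : DΨ 0 / Ψ 0 = 1 / (κ * dΦκ) := by
    rw [hΨκ]
    field_simp
    linear_combination huniq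
  have hDΨ0pos : 0 < DΨ 0 := by nlinarith [huniq]
  have hh0nn : 0 ≤ DΨ 0 / Ψ 0 := div_nonneg hDΨ0pos.le hΨ0pos.le
  -- measure-theoretic setup
  have hindm : Measurable (fun p : ℝ × Ω => if 0 ≤ V p.1 p.2 then (1:ℝ) else 0) := by
    exact Measurable.ite (measurableSet_le measurable_const hjm) measurable_const measurable_const
  have hindnn : ∀ t ω, (0:ℝ) ≤ (if 0 ≤ V t ω then (1:ℝ) else 0) := by
    intro t ω; split <;> norm_num
  have hindle : ∀ t ω, (if 0 ≤ V t ω then (1:ℝ) else 0) ≤ 1 := by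
    intro t ω; split <;> norm_num
  have hfm : ∀ lam : ℝ, Measurable (fun p : ℝ × Ω =>
      Real.exp (-lam * p.1) * (if 0 ≤ V p.1 p.2 then (1:ℝ) else 0)) := by
    intro lam
    exact (Real.measurable_exp.comp (measurable_fst.const_mul (-lam))).mul hindm
  have hfnn : ∀ (lam t : ℝ) (ω : Ω),
      (0:ℝ) ≤ Real.exp (-lam * t) * (if 0 ≤ V t ω then (1:ℝ) else 0) :=
    fun lam t ω => mul_nonneg (Real.exp_nonneg _) (hindnn t ω)
  set g : ℝ → Ω → ENNReal := fun lam ω => ∫⁻ t in Ioi (0:ℝ),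
      ENNReal.ofReal (Real.exp (-lam * t) * (if 0 ≤ V t ω then (1:ℝ) else 0)) with hg
  have hgm : ∀ lam : ℝ, Measurable (g lam) := by
    intro lam
    apply Measurable.lintegral_prod_left
    exact ENNReal.measurable_ofReal.comp (hfm lam)
  set F : ℝ → ENNReal := fun lam => ∫⁻ ω, g lam ω ∂μ with hF
  -- inner Bochner integrals via lintegrals
  have hVsec : ∀ ω : Ω, Measurable (fun t => V t ω) := by
    intro ω
    have : Measurable (fun t : ℝ => Function.uncurry V (t, ω)) :=
      hjm.comp (measurable_id.prodMk measurable_const)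
    exact this
  have hsection : ∀ (lam : ℝ) (ω : Ω),
      Measurable (fun t => Real.exp (-lam * t) * (if 0 ≤ V t ω then (1:ℝ) else 0)) := by
    intro lam ω
    exact (Real.measurable_exp.comp (measurable_id.const_mul (-lam))).mul
      (Measurable.ite (measurableSet_le measurable_const (hVsec ω)) measurable_const
        measurable_const)
  have hinner : ∀ (lam : ℝ) (ω : Ω),
      ∫ t in Ioi (0:ℝ), Real.exp (-lam * t) * (if 0 ≤ V t ω then (1:ℝ) else 0) =
        (g lam ω).toReal := by
    intro lam ω
    exact integral_eq_lintegral_of_nonneg_ae (ae_of_all _ fun t => hfnn lam t ω)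
      (hsection lam ω).aestronglyMeasurable
  -- boundedness for lam > 0
  have hC : ∀ lam : ℝ, 0 < lam →
      (∫⁻ t in Ioi (0:ℝ), ENNReal.ofReal (Real.exp (-lam * t))) < ⊤ := by
    intro lam hlam
    exact (exp_neg_integrableOn_Ioi 0 hlam).lintegral_lt_top
  have hgle : ∀ lam : ℝ, 0 < lam → ∀ ω : Ω,
      g lam ω ≤ ∫⁻ t in Ioi (0:ℝ), ENNReal.ofReal (Real.exp (-lam * t)) := by
    intro lam hlam ω
    apply lintegral_mono
    intro t
    apply ENNReal.ofReal_le_ofReal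
    exact mul_le_of_le_one_right (Real.exp_nonneg _) (hindle t ω)
  have hFlt : ∀ lam : ℝ, 0 < lam → F lam < ⊤ := by
    intro lam hlam
    calc F lam ≤ ∫⁻ _, (∫⁻ t in Ioi (0:ℝ), ENNReal.ofReal (Real.exp (-lam * t))) ∂μ :=
          lintegral_mono fun ω => hgle lam hlam ω
      _ = ∫⁻ t in Ioi (0:ℝ), ENNReal.ofReal (Real.exp (-lam * t)) := by
          rw [lintegral_const, measure_univ, mul_one]
      _ < ⊤ := hC lam hlam
  have hFtoReal : ∀ lam : ℝ, 0 < lam → (F lam).toReal = DΨ lam / Ψ lam := by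
    intro lam hlam
    have h1 := hident lam hlam
    have h2 : ∫ ω, (g lam ω).toReal ∂μ = (F lam).toReal :=
      integral_toReal (hgm lam).aemeasurable
        (ae_of_all _ fun ω => lt_of_le_of_lt (hgle lam hlam ω) (hC lam hlam))
    simp only [hinner lam] at h1
    rw [h2] at h1
    exact h1
  have hFval : ∀ lam : ℝ, 0 < lam → F lam = ENNReal.ofReal (DΨ lam / Ψ lam) := by
    intro lam hlam
    rw [← hFtoReal lam hlam, ENNReal.ofReal_toReal (hFlt lam hlam).ne]
  -- monotonicity in lam
  have hglemono : ∀ a b : ℝ, a ≤ b → ∀ ω : Ω, g b ω ≤ g a ω := by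
    intro a b hab ω
    apply lintegral_mono_ae
    filter_upwards [ae_restrict_mem measurableSet_Ioi] with t ht
    apply ENNReal.ofReal_le_ofReal
    apply mul_le_mul_of_nonneg_right _ (hindnn t ω)
    apply Real.exp_le_exp.mpr
    have ht' : (0:ℝ) < t := ht
    nlinarith
  have hFmono : ∀ a b : ℝ, a ≤ b → F b ≤ F a :=
    fun a b hab => lintegral_mono fun ω => hglemono a b hab ω
  have hanti : ∀ a b : ℝ, 0 < a → a ≤ b → DΨ b / Ψ b ≤ DΨ a / Ψ a := by
    intro a b ha hab
    rw [← hFtoReal a ha, ← hFtoReal b (lt_of_lt_of_le ha hab)]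
    exact ENNReal.toReal_mono (hFlt a ha).ne (hFmono a b hab)
  -- the log-derivative function and MVT bounds
  set G : ℝ → ℝ := fun x => Real.log (Ψ x) with hGdef
  have hGcont : ContinuousOn G (Ici 0) := fun x hx =>
    (Real.continuousAt_log (hΨpos x hx).ne').comp_continuousWithinAt (hΨcont x hx)
  have hGderiv : ∀ x : ℝ, 0 < x → HasDerivAt G (DΨ x / Ψ x) x := by
    intro x hx
    have h1 : HasDerivAt Ψ (DΨ x) x := (hΨderiv x hx.le).hasDerivAt (Ici_mem_nhds hx)
    have h2 := (Real.hasDerivAt_log (hΨpos x hx.le).ne').comp x h1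
    have h3 : (Ψ x)⁻¹ * DΨ x = DΨ x / Ψ x := (div_eq_inv_mul _ _).symm
    rw [h3] at h2
    exact h2
  have hslope : Tendsto (fun lam => (G lam - G 0) / lam) (nhdsWithin 0 (Ioi 0))
      (nhds (DΨ 0 / Ψ 0)) := by
    have hD : HasDerivWithinAt G (DΨ 0 / Ψ 0) (Ici 0) 0 := by
      have h2 := (Real.hasDerivAt_log hΨ0pos.ne').comp_hasDerivWithinAt 0 (hΨderiv 0 le_rfl)
      have h3 : (Ψ 0)⁻¹ * DΨ 0 = DΨ 0 / Ψ 0 := (div_eq_inv_mul _ _).symm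
      rw [h3] at h2
      exact h2
    have h4 := hasDerivWithinAt_iff_tendsto_slope.mp hD
    rw [Ici_sdiff_left] at h4
    apply h4.congr
    intro x
    simp [slope_def_field]
  have hMVT : ∀ a b : ℝ, 0 ≤ a → a < b →
      ∃ c ∈ Ioo a b, DΨ c / Ψ c = (G b - G a) / (b - a) := by
    intro a b ha hab
    exact exists_hasDerivAt_eq_slope G (fun x => DΨ x / Ψ x) hab
      (hGcont.mono fun x hx => le_trans ha hx.1)
      (fun x hx => hGderiv x (lt_of_le_of_lt ha hx.1))
  have hup : ∀ lam : ℝ, 0 < lam → DΨ lam / Ψ lam ≤ (G lam - G 0) / lam := by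
    intro lam hlam
    obtain ⟨c, hc, hcval⟩ := hMVT 0 lam le_rfl hlam
    rw [sub_zero] at hcval
    calc DΨ lam / Ψ lam ≤ DΨ c / Ψ c := hanti c lam hc.1 hc.2.le
      _ = (G lam - G 0) / lam := hcval
  have hlow : ∀ lam : ℝ, 0 < lam →
      2 * ((G (2 * lam) - G 0) / (2 * lam)) - (G lam - G 0) / lam ≤ DΨ lam / Ψ lam := by
    intro lam hlam
    obtain ⟨c, hc, hcval⟩ := hMVT lam (2 * lam) hlam.le (by linarith)
    have h1 : DΨ c / Ψ c ≤ DΨ lam / Ψ lam := hanti lam c hlam hc.1.le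
    have hne : lam ≠ 0 := hlam.ne'
    have h2 : 2 * ((G (2 * lam) - G 0) / (2 * lam)) - (G lam - G 0) / lam
        = (G (2 * lam) - G lam) / (2 * lam - lam) := by
      rw [show 2 * lam - lam = lam by ring]
      field_simp
      ring
    rw [h2, ← hcval]
    exact h1
  -- squeeze
  have hhtends : Tendsto (fun lam => DΨ lam / Ψ lam) (nhdsWithin 0 (Ioi 0))
      (nhds (DΨ 0 / Ψ 0)) := by
    have h2lam : Tendsto (fun lam : ℝ => 2 * lam) (nhdsWithin 0 (Ioi 0))
        (nhdsWithin 0 (Ioi 0)) := by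
      apply tendsto_nhdsWithin_of_tendsto_nhds_of_eventually_within
      · have hcont : Continuous (fun lam : ℝ => 2 * lam) := continuous_const.mul continuous_id
        have h6 := hcont.tendsto 0
        rw [mul_zero] at h6
        exact h6.mono_left nhdsWithin_le_nhds
      · filter_upwards [self_mem_nhdsWithin] with x hx
        exact mul_pos two_pos (mem_Ioi.mp hx)
    have ht1 : Tendsto (fun lam : ℝ => (G (2 * lam) - G 0) / (2 * lam))
        (nhdsWithin 0 (Ioi 0)) (nhds (DΨ 0 / Ψ 0)) := hslope.comp h2lam
    have htlow : Tendsto (fun lam : ℝ =>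
        2 * ((G (2 * lam) - G 0) / (2 * lam)) - (G lam - G 0) / lam)
        (nhdsWithin 0 (Ioi 0)) (nhds (DΨ 0 / Ψ 0)) := by
      have := (ht1.const_mul 2).sub hslope
      have heq : 2 * (DΨ 0 / Ψ 0) - DΨ 0 / Ψ 0 = DΨ 0 / Ψ 0 := by ring
      rwa [heq] at this
    apply tendsto_of_tendsto_of_tendsto_of_le_of_le' htlow hslope
    · filter_upwards [self_mem_nhdsWithin] with x hx
      exact hlow x hx
    · filter_upwards [self_mem_nhdsWithin] with x hx
      exact hup x hx
  -- sequence lam_n = 1/(n+1)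
  have hposn : ∀ n : ℕ, (0:ℝ) < 1 / ((n:ℝ) + 1) := fun n => by positivity
  have hseq : Tendsto (fun n : ℕ => 1 / ((n:ℝ) + 1)) atTop (nhdsWithin 0 (Ioi 0)) := by
    apply tendsto_nhdsWithin_of_tendsto_nhds_of_eventually_within
    · exact tendsto_one_div_add_atTop_nhds_zero_nat
    · exact Eventually.of_forall fun n => hposn n
  have hhn : Tendsto (fun n : ℕ => DΨ (1 / ((n:ℝ) + 1)) / Ψ (1 / ((n:ℝ) + 1))) atTop
      (nhds (DΨ 0 / Ψ 0)) := hhtends.comp hseq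
  have hlamanti : ∀ m n : ℕ, m ≤ n → 1 / ((n:ℝ) + 1) ≤ 1 / ((m:ℝ) + 1) := by
    intro m n hmn
    apply one_div_le_one_div_of_le (by positivity)
    have : (m:ℝ) ≤ (n:ℝ) := Nat.cast_le.mpr hmn
    linarith
  -- monotone convergence: F 0 = ⨆ n, F (1/(n+1))
  have hsupg : ∀ ω : Ω, g 0 ω = ⨆ n : ℕ, g (1 / ((n:ℝ) + 1)) ω := by
    intro ω
    have hcongr : g 0 ω = ∫⁻ t in Ioi (0:ℝ),
        ⨆ n : ℕ, ENNReal.ofReal (Real.exp (-(1 / ((n:ℝ) + 1)) * t) *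
          (if 0 ≤ V t ω then (1:ℝ) else 0)) := by
      apply lintegral_congr_ae
      filter_upwards [ae_restrict_mem measurableSet_Ioi] with t ht
      have ht' : (0:ℝ) < t := ht
      have hmono : Monotone (fun n : ℕ => ENNReal.ofReal (Real.exp (-(1 / ((n:ℝ) + 1)) * t) *
          (if 0 ≤ V t ω then (1:ℝ) else 0))) := by
        intro m n hmn
        apply ENNReal.ofReal_le_ofReal
        apply mul_le_mul_of_nonneg_right _ (hindnn t ω)
        apply Real.exp_le_exp.mpr
        have := hlamanti m n hmn
        nlinarith
      have htend : Tendsto (fun n : ℕ => ENNReal.ofReal (Real.exp (-(1 / ((n:ℝ) + 1)) * t) *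
          (if 0 ≤ V t ω then (1:ℝ) else 0))) atTop
          (nhds (ENNReal.ofReal (Real.exp (-(0:ℝ) * t) * (if 0 ≤ V t ω then (1:ℝ) else 0)))) := by
        apply ENNReal.continuous_ofReal.continuousAt.tendsto.comp
        apply Tendsto.mul_const
        apply Real.continuous_exp.continuousAt.tendsto.comp
        have h5 : Tendsto (fun n : ℕ => -(1 / ((n:ℝ) + 1))) atTop (nhds (-(0:ℝ))) :=
          tendsto_one_div_add_atTop_nhds_zero_nat.neg
        simpa using h5.mul_const t
      exact (iSup_eq_of_tendsto hmono htend).symm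
    have hmeas : ∀ n : ℕ, AEMeasurable (fun t : ℝ => ENNReal.ofReal
        (Real.exp (-(1 / ((n:ℝ) + 1)) * t) * (if 0 ≤ V t ω then (1:ℝ) else 0)))
        (volume.restrict (Ioi 0)) :=
      fun n => ((hsection (1 / ((n:ℝ) + 1)) ω).ennreal_ofReal).aemeasurable
    have hmono2 : ∀ᵐ t ∂(volume.restrict (Ioi (0:ℝ))), Monotone fun n : ℕ =>
        ENNReal.ofReal (Real.exp (-(1 / ((n:ℝ) + 1)) * t) *
          (if 0 ≤ V t ω then (1:ℝ) else 0)) := by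
      filter_upwards [ae_restrict_mem measurableSet_Ioi] with t ht
      intro m n hmn
      apply ENNReal.ofReal_le_ofReal
      apply mul_le_mul_of_nonneg_right _ (hindnn t ω)
      apply Real.exp_le_exp.mpr
      have ht' : (0:ℝ) < t := ht
      have := hlamanti m n hmn
      nlinarith
    calc g 0 ω = ∫⁻ t in Ioi (0:ℝ),
        ⨆ n : ℕ, ENNReal.ofReal (Real.exp (-(1 / ((n:ℝ) + 1)) * t) *
          (if 0 ≤ V t ω then (1:ℝ) else 0)) := hcongr
      _ = ⨆ n : ℕ, ∫⁻ t in Ioi (0:ℝ),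
          ENNReal.ofReal (Real.exp (-(1 / ((n:ℝ) + 1)) * t) *
            (if 0 ≤ V t ω then (1:ℝ) else 0)) := lintegral_iSup' hmeas hmono2
      _ = ⨆ n : ℕ, g (1 / ((n:ℝ) + 1)) ω := rfl
  have hF0sup : F 0 = ⨆ n : ℕ, F (1 / ((n:ℝ) + 1)) := by
    calc F 0 = ∫⁻ ω, ⨆ n : ℕ, g (1 / ((n:ℝ) + 1)) ω ∂μ := lintegral_congr fun ω => hsupg ω
      _ = ⨆ n : ℕ, F (1 / ((n:ℝ) + 1)) :=
        lintegral_iSup' (fun n => (hgm _).aemeasurable)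
          (ae_of_all _ fun ω m n hmn => hglemono _ _ (hlamanti m n hmn) ω)
  have hF0 : F 0 = ENNReal.ofReal (DΨ 0 / Ψ 0) := by
    rw [hF0sup]
    have heach : ∀ n : ℕ, F (1 / ((n:ℝ) + 1)) =
        ENNReal.ofReal (DΨ (1 / ((n:ℝ) + 1)) / Ψ (1 / ((n:ℝ) + 1))) :=
      fun n => hFval _ (hposn n)
    simp only [heach]
    apply iSup_eq_of_tendsto
    · intro m n hmn
      exact ENNReal.ofReal_le_ofReal (hanti _ _ (hposn n) (hlamanti m n hmn))
    · exact (ENNReal.continuous_ofReal.continuousAt.tendsto).comp hhn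
  have hF0ne : F 0 ≠ ⊤ := by rw [hF0]; exact ENNReal.ofReal_ne_top
  -- conclude
  have hfirst : ∫ ω, (∫ t in Ioi (0:ℝ), (if 0 ≤ V t ω then (1:ℝ) else 0)) ∂μ = DΨ 0 / Ψ 0 := by
    have h1 : ∀ ω : Ω, ∫ t in Ioi (0:ℝ), (if 0 ≤ V t ω then (1:ℝ) else 0) = (g 0 ω).toReal := by
      intro ω
      have := hinner 0 ω
      simpa [neg_zero, zero_mul, Real.exp_zero] using this
    calc ∫ ω, (∫ t in Ioi (0:ℝ), (if 0 ≤ V t ω then (1:ℝ) else 0)) ∂μ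
        = ∫ ω, (g 0 ω).toReal ∂μ := by
          exact integral_congr_ae (ae_of_all _ h1)
      _ = (F 0).toReal := integral_toReal (hgm 0).aemeasurable
          (ae_lt_top (hgm 0) hF0ne)
      _ = DΨ 0 / Ψ 0 := by rw [hF0, ENNReal.toReal_ofReal hh0nn]
  exact ⟨hfirst, hsecond⟩
end

section
/- Let (χ_n)_{n≥1} be i.i.d. nonnegative random variables and c > 0 a constant. Define R_0^x = x and R_{n+1}^x = (1/4)R_n^x + χ_{n+1}. Let S_n = Σ_{k=1}^n (χ_k − c) and μ = inf{n ≥ 1 : S_n < 0}. Then on the event {μ = m}, for any x ≥ (16/3)c, one has R_m^x ≤ x/2. -/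
theorem stmt_9 (χ : ℕ → ℝ) (hχ : ∀ n, 0 ≤ χ n) (c : ℝ) (hc : 0 < c)
    (x : ℝ) (hx : (16 / 3) * c ≤ x)
    (R : ℕ → ℝ) (hR0 : R 0 = x) (hRrec : ∀ n : ℕ, R (n + 1) = (1 / 4) * R n + χ (n + 1))
    (S : ℕ → ℝ) (hS : ∀ n : ℕ, S n = ∑ k ∈ Finset.Icc 1 n, (χ k - c))
    (m : ℕ) (hm1 : 1 ≤ m) (hSm : S m < 0)
    (hSk : ∀ k : ℕ, 1 ≤ k → k < m → 0 ≤ S k) :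
    R m ≤ x / 2 := by
  have hS0 : S 0 = 0 := by simp [hS]
  have hstep : ∀ n : ℕ, S (n + 1) = S n + (χ (n + 1) - c) := by
    intro n
    rw [hS, hS, Finset.sum_Icc_succ_top (by omega)]
  have hx0 : 0 ≤ x := by nlinarith
  have key : ∀ n, n ≤ m → R n ≤ x / 4 ^ n + 4 * c / 3 + S n := by
    intro n
    induction n with
    | zero => intro _; rw [hR0, hS0]; simp; positivity
    | succ n ih =>
      intro h
      have hn : n ≤ m := by omega
      have ihn := ih hn
      have hSn : 0 ≤ S n := by
        rcases Nat.eq_zero_or_pos n with h0 | h0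
        · rw [h0, hS0]
        · exact hSk n h0 (by omega)
      have h4 : (0:ℝ) < 4 ^ n := by positivity
      have hpow : x / 4 ^ (n + 1) = (x / 4 ^ n) / 4 := by
        rw [pow_succ, ← div_div]
      rw [hRrec, hstep, hpow]
      nlinarith [ihn, hSn]
  have hkm := key m le_rfl
  have hpm : (4:ℝ) ≤ 4 ^ m := by
    calc (4:ℝ) = 4 ^ 1 := by norm_num
    _ ≤ 4 ^ m := by exact pow_le_pow_right₀ (by norm_num) hm1
  have : x / 4 ^ m ≤ x / 4 := by
    apply div_le_div_of_nonneg_left hx0 (by norm_num) hpm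
  nlinarith
end
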